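/- Let a₁,…,aₙ be reals and Δ ≥ 0, and let b be the lower convex hull of the points (i, aᵢ + Δ) evaluated at integer points. Then there exists a convex vector c with max_i |cᵢ - aᵢ| ≤ Δ if and only if bᵢ ≥ aᵢ - Δ for all i; in that case b itself is such a vector. -/
import Mathlib


/-- A vector (indexed `0,…,n-1`) is convex if its second-order differences are
nonnegative. -/
def ConvexVec (n : ℕ) (b : ℕ → ℝ) : Prop :=
  ∀ i : ℕ, 1 ≤ i → i + 1 < n → b i - b (i - 1) ≤ b (i + 1) - b i

theorem stmt_11 (n : ℕ) (a b : ℕ → ℝ) (Δ : ℝ) (hΔ : 0 ≤ Δ)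
    (hb1 : ConvexVec n b) (hb2 : ∀ i < n, b i ≤ a i + Δ)
    (hb3 : ∀ c : ℕ → ℝ, ConvexVec n c → (∀ i < n, c i ≤ a i + Δ) →
      ∀ i < n, c i ≤ b i) :
    ((∃ c : ℕ → ℝ, ConvexVec n c ∧ ∀ i < n, |c i - a i| ≤ Δ) ↔
      ∀ i < n, a i - Δ ≤ b i) ∧
    ((∀ i < n, a i - Δ ≤ b i) → ∀ i < n, |b i - a i| ≤ Δ) := by
  have key : (∀ i < n, a i - Δ ≤ b i) → ∀ i < n, |b i - a i| ≤ Δ := by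
    intro h i hi
    rw [abs_le]
    constructor
    · linarith [h i hi]
    · linarith [hb2 i hi]
  refine ⟨⟨?_, ?_⟩, key⟩
  · rintro ⟨c, hc1, hc2⟩ i hi
    have hle : ∀ j < n, c j ≤ a j + Δ := fun j hj => by
      have := abs_le.mp (hc2 j hj); linarith [this.2]
    have h1 := hb3 c hc1 hle i hi
    have h2 := (abs_le.mp (hc2 i hi)).1
    linarith
  · intro h
    exact ⟨b, hb1, key h⟩
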